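/- Let K ⊆ ℝⁿ be nonempty, closed, and convex and let f̂ : ℝⁿ → ℝ be α-strongly convex with β-Lipschitz gradient. For c ∈ ℝⁿ, let x*(c) denote the unique minimizer of x ↦ f̂(x - c) over K. Then the map c ↦ x*(c) is (β/α)-Lipschitz. -/

import Mathlib

open scoped RealInnerProductSpace

private lemma var_ineq {n : ℕ} {K : Set (EuclideanSpace ℝ (Fin n))}
    (hKconv : Convex ℝ K)
    {fhat : EuclideanSpace ℝ (Fin n) → ℝ}
    {ghat : EuclideanSpace ℝ (Fin n) → EuclideanSpace ℝ (Fin n)}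
    (hgrad : ∀ x, HasGradientAt fhat (ghat x) x)
    {u c : EuclideanSpace ℝ (Fin n)} (hu : u ∈ K)
    (hm : ∀ y ∈ K, fhat (u - c) ≤ fhat (y - c))
    {y : EuclideanSpace ℝ (Fin n)} (hy : y ∈ K) :
    0 ≤ ⟪ghat (u - c), y - u⟫ := by
  set φ : ℝ → ℝ := fun t => fhat (u + t • (y - u) - c) with hφdef
  have hline : HasDerivAt (fun t : ℝ => u + t • (y - u) - c) (y - u) 0 := by
    have h1 : HasDerivAt (fun t : ℝ => t • (y - u)) (y - u) 0 := by
      simpa using (hasDerivAt_id (0:ℝ)).smul_const (y - u)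
    simpa using (h1.const_add u).sub_const c
  have hφ : HasDerivAt φ ⟪ghat (u - c), y - u⟫ 0 := by
    have hf : HasFDerivAt fhat ((InnerProductSpace.toDual ℝ _) (ghat (u - c))) (u - c) :=
      (hgrad (u - c)).hasFDerivAt
    have : HasFDerivAt fhat ((InnerProductSpace.toDual ℝ _) (ghat (u - c)))
        (u + (0:ℝ) • (y - u) - c) := by simpa using hf
    have h2 := this.comp_hasDerivAt 0 hline
    simp only [InnerProductSpace.toDual_apply_apply] at h2
    exact h2
  have hslope : Filter.Tendsto (slope φ 0) (nhdsWithin 0 (Set.Ioi 0))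
      (nhds ⟪ghat (u - c), y - u⟫) := by
    exact (hasDerivAt_iff_tendsto_slope.mp hφ).mono_left
      (nhdsWithin_mono _ (fun t ht => ne_of_gt ht))
  refine ge_of_tendsto hslope ?_
  filter_upwards [Ioc_mem_nhdsGT_of_mem (Set.left_mem_Ico.2 one_pos)] with t ht
  have htpos : (0:ℝ) < t := ht.1
  have hmemK : u + t • (y - u) ∈ K := by
    have := hKconv hu hy (by linarith [ht.2] : (0:ℝ) ≤ 1 - t) (le_of_lt htpos) (by ring)
    convert this using 1
    simp [smul_sub, sub_smul]
    module
  have hge : φ 0 ≤ φ t := by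
    have := hm _ hmemK
    simpa [φ] using this
  have : slope φ 0 t = (φ t - φ 0) / t := by simp [slope_def_field, div_eq_iff (ne_of_gt htpos)]
  rw [this]
  exact div_nonneg (by linarith) htpos.le

/-- For `K` nonempty closed convex and `f̂` `α`-strongly convex with `β`-Lipschitz
gradient, the map sending the translation `c` to the minimizer `x*(c)` of
`x ↦ f̂(x - c)` over `K` is `(β/α)`-Lipschitz. -/
theorem constrained_translation_solution_map_lipschitz
    {n : ℕ} (K : Set (EuclideanSpace ℝ (Fin n)))
    (fhat : EuclideanSpace ℝ (Fin n) → ℝ)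
    (ghat : EuclideanSpace ℝ (Fin n) → EuclideanSpace ℝ (Fin n))
    (xstar : EuclideanSpace ℝ (Fin n) → EuclideanSpace ℝ (Fin n))
    (α β : ℝ) (hα : 0 < α) (hβ : 0 ≤ β)
    (hK : K.Nonempty) (hKc : IsClosed K) (hKconv : Convex ℝ K)
    (hgrad : ∀ x, HasGradientAt fhat (ghat x) x)
    (hstrong : ∀ x y, α * ‖x - y‖ ^ 2 ≤ ⟪ghat x - ghat y, x - y⟫)
    (hglip : ∀ x y, ‖ghat x - ghat y‖ ≤ β * ‖x - y‖)
    (hmem : ∀ c, xstar c ∈ K)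
    (hmin : ∀ c, ∀ y ∈ K, fhat (xstar c - c) ≤ fhat (y - c)) :
    ∀ c c', ‖xstar c - xstar c'‖ ≤ (β / α) * ‖c - c'‖ := by
  intro c c'
  set u := xstar c with hu
  set v := xstar c' with hv
  have key1 : 0 ≤ ⟪ghat (u - c), v - u⟫ :=
    var_ineq hKconv hgrad (hmem c) (hmin c) (hmem c')
  have key2 : 0 ≤ ⟪ghat (v - c'), u - v⟫ :=
    var_ineq hKconv hgrad (hmem c') (hmin c') (hmem c)
  have hsc : α * ‖u - v‖ ^ 2 ≤ ⟪ghat (u - c) - ghat (v - c), u - v⟫ := by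
    have := hstrong (u - c) (v - c)
    simpa [sub_sub_sub_cancel_right] using this
  have hsplit : ⟪ghat (u - c) - ghat (v - c), u - v⟫ =
      ⟪ghat (u - c), v - u⟫ * (-1) + (- ⟪ghat (v - c'), u - v⟫)
      + ⟪ghat (v - c') - ghat (v - c), u - v⟫ := by
    rw [show v - u = -(u - v) by abel]
    simp only [inner_sub_left, inner_neg_right]
    ring
  have hcs : ⟪ghat (v - c') - ghat (v - c), u - v⟫ ≤ β * ‖c - c'‖ * ‖u - v‖ := by
    calc ⟪ghat (v - c') - ghat (v - c), u - v⟫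
        ≤ ‖ghat (v - c') - ghat (v - c)‖ * ‖u - v‖ := real_inner_le_norm _ _
      _ ≤ (β * ‖c - c'‖) * ‖u - v‖ := by
          apply mul_le_mul_of_nonneg_right _ (norm_nonneg _)
          have := hglip (v - c') (v - c)
          simpa [show v - c' - (v - c) = c - c' by abel] using this
  have hmain : α * ‖u - v‖ ^ 2 ≤ β * ‖c - c'‖ * ‖u - v‖ := by
    rw [hsplit] at hsc
    nlinarith [key1, key2, hcs]
  rcases eq_or_lt_of_le (norm_nonneg (u - v)) with h0 | h0
  · rw [← h0]
    positivity
  · rw [div_mul_eq_mul_div, le_div_iff₀ hα]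
    nlinarith [hmain]
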